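/- Let q be a real number with q > 1 and let n be a positive integer. For a composition (c_1, …, c_j) of n into positive integer parts, set a_0 = 0 and a_k = c_1 + … + c_k for 1 ≤ k ≤ j. Then Σ over all compositions (c_1, …, c_j) of n of (−1)^{n−j} · ∏_{k=1}^{j} [a_k choose a_{k−1}]_q equals q^{n(n−1)/2}. -/

import Mathlib

/-- The Gaussian binomial coefficient `[n choose k]_q` for a real base `q`. -/
noncomputable def gbinom (q : ℝ) (n k : ℕ) : ℝ :=
  ∏ j ∈ Finset.Icc 1 k, (q ^ (n - k + j) - 1) / (q ^ j - 1)

namespace Stmt10Aux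

open Finset

/-- The q-factorial-like product `∏_{j=1}^m (q^j - 1)`. -/
noncomputable def fac (q : ℝ) (m : ℕ) : ℝ := ∏ j ∈ Finset.Icc 1 m, (q ^ j - 1)

variable {q : ℝ}

lemma pow_sub_one_pos (hq : 1 < q) {j : ℕ} (hj : 1 ≤ j) : 0 < q ^ j - 1 := by
  have : (1:ℝ) < q ^ j := one_lt_pow₀ hq (by omega)
  linarith

lemma fac_pos (hq : 1 < q) (m : ℕ) : 0 < fac q m := by
  refine Finset.prod_pos fun j hj => ?_
  exact pow_sub_one_pos hq (Finset.mem_Icc.mp hj).1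

lemma fac_succ (m : ℕ) : fac q (m + 1) = fac q m * (q ^ (m + 1) - 1) := by
  simpa [fac] using Finset.prod_Icc_succ_top (by omega) (fun j => (q ^ j - 1))

lemma fac_zero : fac q 0 = 1 := by simp [fac]

lemma gbinom_eq (hq : 1 < q) {n k : ℕ} (h : k ≤ n) :
    gbinom q n k = fac q n / (fac q k * fac q (n - k)) := by
  have hnum : (∏ j ∈ Finset.Icc 1 k, (q ^ (n - k + j) - 1))
      = ∏ i ∈ Finset.Icc (n - k + 1) n, (q ^ i - 1) := by
    have h2 := Finset.prod_map (Finset.Icc 1 k) (addLeftEmbedding (n - k))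
      (fun i => (q ^ i - 1))
    rw [Finset.map_add_left_Icc] at h2
    simp only [addLeftEmbedding_apply] at h2
    rw [show n - k + k = n by omega] at h2
    exact h2.symm
  have hsplit : fac q (n - k) * (∏ i ∈ Finset.Icc (n - k + 1) n, (q ^ i - 1)) = fac q n := by
    unfold fac
    rw [show (1:ℕ) = 0 + 1 from rfl, Finset.Icc_add_one_left_eq_Ioc, Finset.Icc_add_one_left_eq_Ioc, zero_add, Finset.Icc_add_one_left_eq_Ioc]
    exact Finset.prod_Ioc_consecutive _ (Nat.zero_le _) (by omega)
  have hk : fac q k ≠ 0 := (fac_pos hq k).ne'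
  have hnk : fac q (n - k) ≠ 0 := (fac_pos hq (n - k)).ne'
  rw [gbinom, Finset.prod_div_distrib, hnum]
  show (∏ i ∈ Finset.Icc (n - k + 1) n, (q ^ i - 1)) / fac q k = _
  rw [← hsplit]
  field_simp

lemma gbinom_zero (n : ℕ) : gbinom q n 0 = 1 := by simp [gbinom]

lemma gbinom_self (hq : 1 < q) (n : ℕ) : gbinom q n n = 1 := by
  rw [gbinom_eq hq le_rfl, Nat.sub_self, fac_zero, mul_one,
    div_self (fac_pos hq n).ne']

lemma pascal (hq : 1 < q) {m k : ℕ} (h : k + 1 ≤ m) :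
    gbinom q (m + 1) (k + 1) = gbinom q m k + q ^ (k + 1) * gbinom q m (k + 1) := by
  rw [gbinom_eq hq (by omega), gbinom_eq hq (by omega), gbinom_eq hq h]
  have h1 : m + 1 - (k + 1) = m - k := by omega
  have h2 : m - (k + 1) = m - k - 1 := by omega
  have h3 : m - k = (m - k - 1) + 1 := by omega
  rw [h1, h2, fac_succ m, fac_succ k, h3, fac_succ (m - k - 1)]
  have hpow : q ^ (m + 1) = q ^ (k + 1) * q ^ (m - k - 1 + 1) := by
    rw [← pow_add]; congr 1; omega
  have e1 : fac q m ≠ 0 := (fac_pos hq m).ne'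
  have e2 : fac q k ≠ 0 := (fac_pos hq k).ne'
  have e3 : fac q (m - k - 1) ≠ 0 := (fac_pos hq (m - k - 1)).ne'
  have e4 : q ^ (k + 1) - 1 ≠ 0 := (pow_sub_one_pos hq (by omega)).ne'
  have e5 : q ^ (m - k - 1 + 1) - 1 ≠ 0 := (pow_sub_one_pos hq (by omega)).ne'
  rw [hpow, show m - k - 1 + 1 - 1 = m - k - 1 by omega]
  generalize fac q m = a at *
  generalize fac q k = b at *
  generalize fac q (m - k - 1) = c at *
  generalize q ^ (k + 1) = x at *
  generalize q ^ (m - k - 1 + 1) = y at *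
  field_simp
  ring

lemma choose_two_succ (k : ℕ) : (k + 1).choose 2 = k.choose 2 + k := by
  rw [Nat.choose_succ_succ]
  simp [Nat.choose_one_right, Nat.add_comm]

/-- The alternating q-binomial identity `∑ (-1)^k q^{C(k,2)} [n,k]_q = 0` for `n ≥ 1`. -/
lemma key (hq : 1 < q) (n : ℕ) (hn : 0 < n) :
    ∑ k ∈ Finset.range (n + 1), (-1 : ℝ) ^ k * q ^ (k.choose 2) * gbinom q n k = 0 := by
  obtain ⟨m, rfl⟩ : ∃ m, n = m + 1 := ⟨n - 1, by omega⟩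
  set f : ℕ → ℝ := fun k => (-1 : ℝ) ^ k * q ^ (k.choose 2) * gbinom q (m + 1) k with hf
  set h : ℕ → ℝ := fun k => (-1 : ℝ) ^ k * q ^ ((k + 1).choose 2) * gbinom q m k with hh
  have mid : ∑ k ∈ Finset.range m, f (k + 1) = h m - h 0 := by
    rw [← Finset.sum_range_sub h m]
    refine Finset.sum_congr rfl fun k hk => ?_
    have hk' : k + 1 ≤ m := Finset.mem_range.mp hk
    simp only [hf, hh]
    rw [pascal hq hk']
    rw [choose_two_succ (k + 1), choose_two_succ k]
    rw [pow_add, pow_add, pow_add]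
    ring
  rw [Finset.sum_range_succ, Finset.sum_range_succ' f m, mid]
  have h0 : h 0 = 1 := by simp [hh, gbinom_zero]
  have f0 : f 0 = 1 := by simp [hf, gbinom_zero]
  have hm : h m = (-1 : ℝ) ^ m * q ^ ((m + 1).choose 2) := by
    simp [hh, gbinom_self hq]
  rw [h0, f0, hm]
  rw [gbinom_self hq, pow_succ]
  ring

lemma composition_zero_blocks (c : Composition 0) : c.blocks = [] := by
  have hsum := c.blocks_sum
  rcases hc : c.blocks with _ | ⟨a, l⟩
  · rfl
  · exfalso
    have ha : a = 0 := by
      exact List.sum_eq_zero_iff.mp (hc ▸ hsum) a (by simp)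
    have := c.blocks_pos (by rw [hc]; exact List.mem_cons_self)
    omega

/-- Splitting off the last block: `Composition n ≃ Σ m : Fin n, Composition m` for `n > 0`. -/
noncomputable def splitEquiv (n : ℕ) (hn : 0 < n) :
    Composition n ≃ Σ m : Fin n, Composition m.val where
  toFun c :=
    ⟨⟨c.sizeUpTo (c.length - 1), by
        have hl : 0 < c.length := c.length_pos_of_pos hn
        have := c.sizeUpTo_strict_mono (show c.length - 1 < c.length by omega)
        rw [show c.length - 1 + 1 = c.length by omega, c.sizeUpTo_length] at this
        exact this⟩,
      ⟨c.blocks.dropLast,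
        fun hi => c.blocks_pos (List.dropLast_subset _ hi),
        by
          show c.blocks.dropLast.sum = c.sizeUpTo (c.length - 1)
          rw [Composition.sizeUpTo, ← c.blocks_length, ← List.dropLast_eq_take]⟩⟩
  invFun x :=
    ⟨x.2.blocks ++ [n - x.1.val],
      fun hi => by
        rcases List.mem_append.mp hi with h | h
        · exact x.2.blocks_pos h
        · have : n - x.1.val > 0 := by have := x.1.isLt; omega
          simpa using List.mem_singleton.mp h ▸ this,
      by
        rw [List.sum_append, x.2.blocks_sum]
        simp only [List.sum_cons, List.sum_nil, add_zero]
        have := x.1.isLt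
        omega⟩
  left_inv c := by
    have hl : 0 < c.length := c.length_pos_of_pos hn
    have hne : c.blocks ≠ [] := by
      intro h
      have := c.blocks_length
      rw [h] at this
      simp at this
      omega
    have hsplit := List.dropLast_append_getLast hne
    have hdl : c.blocks.dropLast.sum = c.sizeUpTo (c.length - 1) := by
      rw [Composition.sizeUpTo, ← c.blocks_length, ← List.dropLast_eq_take]
    have hsum : c.blocks.dropLast.sum + c.blocks.getLast hne = n := by
      conv_rhs => rw [← c.blocks_sum, ← hsplit]
      simp [List.sum_append]
    apply Composition.ext
    show c.blocks.dropLast ++ [n - c.sizeUpTo (c.length - 1)] = c.blocks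
    rw [show n - c.sizeUpTo (c.length - 1) = c.blocks.getLast hne by omega]
    exact hsplit
  right_inv := by
    rintro ⟨⟨m, hm⟩, d⟩
    have hblocks : (d.blocks ++ [n - m]).dropLast = d.blocks := List.dropLast_concat
    have hlen : (d.blocks ++ [n - m]).length = d.blocks.length + 1 := by simp
    have hsize : (d.blocks ++ [n - m]).dropLast.sum = m := by
      rw [hblocks, d.blocks_sum]
    -- reduce sigma equality
    have h1 : ((d.blocks ++ [n - m]).take ((d.blocks.length + 1) - 1)).sum = m := by
      simp only [Nat.add_sub_cancel]
      rw [List.take_append_of_le_length le_rfl, List.take_length, d.blocks_sum]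
    refine Sigma.ext ?_ ?_
    · show Fin.mk _ _ = Fin.mk m hm
      apply Fin.ext
      show (List.take _ (d.blocks ++ [n - m])).sum = m
      convert h1 using 3
      · show (d.blocks ++ [n - m]).length - 1 = d.blocks.length + 1 - 1
        rw [hlen]
    · -- HEq of the compositions
      have key2 : ∀ (a b : ℕ) (hab : a = b) (c1 : Composition a) (c2 : Composition b),
          c1.blocks = c2.blocks → HEq c1 c2 := by
        rintro a b rfl c1 c2 h
        exact heq_of_eq (Composition.ext h)
      apply key2
      · show (List.take _ (d.blocks ++ [n - m])).sum = m
        convert h1 using 3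
        show (d.blocks ++ [n - m]).length - 1 = d.blocks.length + 1 - 1
        rw [hlen]
      · show (d.blocks ++ [n - m]).dropLast = d.blocks
        exact hblocks

/-- The composition sum, for induction. -/
noncomputable def S (q : ℝ) (n : ℕ) : ℝ :=
  ∑ c : Composition n,
    (-1 : ℝ) ^ (n - c.length) *
      ∏ k ∈ Finset.range c.length, gbinom q (c.sizeUpTo (k + 1)) (c.sizeUpTo k)

lemma S_zero : S q 0 = 1 := by
  haveI : Unique (Composition 0) :=
    ⟨⟨⟨[], by simp, rfl⟩⟩, fun c => Composition.ext (composition_zero_blocks c)⟩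
  rw [S, Fintype.sum_unique]
  simp [Composition.length, composition_zero_blocks]

lemma S_rec (hq : 1 < q) (n : ℕ) (hn : 0 < n) :
    S q n = ∑ m ∈ Finset.range n, (-1 : ℝ) ^ (n - 1 - m) * gbinom q n m * S q m := by
  rw [S, ← Equiv.sum_comp (splitEquiv n hn).symm]
  rw [← Finset.univ_sigma_univ, Finset.sum_sigma]
  rw [← Fin.sum_univ_eq_sum_range
    (fun m => (-1 : ℝ) ^ (n - 1 - m) * gbinom q n m * S q m) n]
  refine Finset.sum_congr rfl fun m _ => ?_
  rw [S, Finset.mul_sum]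
  refine Finset.sum_congr rfl fun d _ => ?_
  set e : Composition n := (splitEquiv n hn).symm ⟨m, d⟩ with he
  have heblocks : e.blocks = d.blocks ++ [n - m.val] := rfl
  have helen : e.length = d.length + 1 := by
    rw [← e.blocks_length, heblocks, ← d.blocks_length]; simp
  have hsz : ∀ k, k ≤ d.length → e.sizeUpTo k = d.sizeUpTo k := by
    intro k hk
    rw [Composition.sizeUpTo, Composition.sizeUpTo, heblocks,
      List.take_append_of_le_length (by rw [d.blocks_length]; exact hk)]
  have hszn : e.sizeUpTo (d.length + 1) = n := by
    rw [← helen, e.sizeUpTo_length]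
  have hdm : d.sizeUpTo d.length = m.val := d.sizeUpTo_length
  have hprod : ∏ k ∈ Finset.range e.length,
      gbinom q (e.sizeUpTo (k + 1)) (e.sizeUpTo k)
      = (∏ k ∈ Finset.range d.length, gbinom q (d.sizeUpTo (k + 1)) (d.sizeUpTo k))
        * gbinom q n m.val := by
    rw [helen, Finset.prod_range_succ, hszn, hsz d.length le_rfl, hdm]
    congr 1
    refine Finset.prod_congr rfl fun k hk => ?_
    have hk' : k < d.length := Finset.mem_range.mp hk
    rw [hsz (k + 1) (by omega), hsz k (by omega)]
  have hdl : d.length ≤ m.val := d.length_le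
  have hmn : m.val < n := m.isLt
  have hsign : ((-1 : ℝ)) ^ (n - e.length)
      = (-1 : ℝ) ^ (n - 1 - m.val) * (-1 : ℝ) ^ (m.val - d.length) := by
    rw [helen, ← pow_add]
    congr 1
    omega
  rw [hprod, hsign]
  ring

lemma S_eq (hq : 1 < q) (n : ℕ) : S q n = q ^ n.choose 2 := by
  induction n using Nat.strong_induction_on with
  | _ n ih =>
    rcases Nat.eq_zero_or_pos n with rfl | hn
    · simpa using S_zero
    · rw [S_rec hq n hn]
      have hsum : ∀ m ∈ Finset.range n,
          (-1 : ℝ) ^ (n - 1 - m) * gbinom q n m * S q m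
          = (-1 : ℝ) ^ (n - 1) * ((-1 : ℝ) ^ m * q ^ m.choose 2 * gbinom q n m) := by
        intro m hm
        have hmn : m < n := Finset.mem_range.mp hm
        rw [ih m hmn]
        have hpar : ((-1 : ℝ)) ^ (n - 1 - m) * (-1 : ℝ) ^ m = (-1 : ℝ) ^ (n - 1) := by
          rw [← pow_add]; congr 1; omega
        have hsq : ((-1 : ℝ)) ^ m * (-1 : ℝ) ^ m = 1 := by
          rw [← pow_add, ← two_mul, pow_mul]; norm_num
        rw [← hpar]
        linear_combination (-(-1 : ℝ) ^ (n - 1 - m) * gbinom q n m * q ^ m.choose 2) * hsq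
      rw [Finset.sum_congr rfl hsum, ← Finset.mul_sum]
      have hkey := key hq n hn
      rw [Finset.sum_range_succ, gbinom_self hq] at hkey
      have hpart : ∑ m ∈ Finset.range n, (-1 : ℝ) ^ m * q ^ m.choose 2 * gbinom q n m
          = -((-1 : ℝ) ^ n * q ^ n.choose 2) := by linarith
      rw [hpart]
      have : ((-1 : ℝ)) ^ (n - 1) * (-1 : ℝ) ^ n = -1 := by
        rw [← pow_add]
        have : Odd (n - 1 + n) := ⟨n - 1, by omega⟩
        simpa using this.neg_one_pow
      calc (-1 : ℝ) ^ (n - 1) * -((-1 : ℝ) ^ n * q ^ n.choose 2)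
          = -((-1 : ℝ) ^ (n - 1) * (-1 : ℝ) ^ n) * q ^ n.choose 2 := by ring
        _ = q ^ n.choose 2 := by rw [this]; ring

end Stmt10Aux

/-- For a composition `c = (c_1, …, c_j)` of `n`, the partial sums are
`a_k = c.sizeUpTo k = c_1 + ⋯ + c_k`, with `a_0 = 0` and `a_j = n`.  The sum over all
compositions of `n` of `(−1)^{n−j} · ∏_{k=1}^{j} [a_k choose a_{k−1}]_q` is `q^{n(n−1)/2}`. -/
theorem stmt10 (q : ℝ) (hq : 1 < q) (n : ℕ) (hn : 0 < n) :
    ∑ c : Composition n,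
      (-1 : ℝ) ^ (n - c.length) *
        ∏ k ∈ Finset.range c.length, gbinom q (c.sizeUpTo (k + 1)) (c.sizeUpTo k) =
    q ^ (n * (n - 1) / 2) := by
  have := Stmt10Aux.S_eq hq n
  rw [Stmt10Aux.S] at this
  rw [this, Nat.choose_two_right]
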